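/- Let W be a finite simple graph with at least one vertex, let n ≥ 1 be an integer, and let β be a real number with 0 ≤ β ≤ 1. Then (1/|V(W)|^{n+1+β}) · Σ (deg_W(v_n))^β ≥ t(K_2, W)^{n+β}, where the sum ranges over all walks (v_0, v_1, …, v_n) in W, i.e., all (n+1)-tuples of vertices with v_i adjacent to v_{i+1} for each 0 ≤ i ≤ n−1, and deg_W(v) is the degree of vertex v in W. -/

import Mathlib

open scoped Classical

namespace Stmt12Aux

open Finset Real

variable {V : Type} [Fintype V] (W : SimpleGraph V)

noncomputable def dR (x : V) : ℝ := ((Finset.univ.filter fun u => W.Adj x u).card : ℝ)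

lemma dR_nonneg (x : V) : 0 ≤ dR W x := Nat.cast_nonneg _

lemma dR_pos {x : V} (h : ∃ u, W.Adj x u) : 0 < dR W x := by
  obtain ⟨u, hu⟩ := h
  have : (Finset.univ.filter fun u => W.Adj x u).Nonempty := ⟨u, by simp [hu]⟩
  have h2 := Finset.card_pos.mpr this
  unfold dR
  exact_mod_cast h2

noncomputable def walkSet (n : ℕ) : Finset (Fin (n+1) → V) :=
  Finset.univ.filter (fun v => ∀ i : Fin n, W.Adj (v i.castSucc) (v i.succ))

noncomputable def Pw (n : ℕ) (v : Fin (n+1) → V) : ℝ :=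
  ∏ i : Fin n, (dR W (v i.castSucc))⁻¹

lemma sum_nbr (f : V → ℝ) :
    ∑ x : V, ∑ u ∈ Finset.univ.filter (fun u => W.Adj x u), f u = ∑ u : V, dR W u * f u := by
  simp_rw [Finset.sum_filter]
  rw [Finset.sum_comm]
  refine Finset.sum_congr rfl fun u _ => ?_
  have h1 : ∀ x : V, (if W.Adj x u then f u else 0) = (if W.Adj u x then f u else 0) :=
    fun x => by rw [W.adj_comm]
  simp_rw [h1, ← Finset.sum_filter, Finset.sum_const, nsmul_eq_mul]
  rfl

lemma degPos {n : ℕ} (hn : 1 ≤ n) {v : Fin (n+1) → V}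
    (hv : ∀ i : Fin n, W.Adj (v i.castSucc) (v i.succ)) (j : Fin (n+1)) :
    0 < dR W (v j) := by
  refine Fin.lastCases ?_ ?_ j
  · obtain ⟨m, rfl⟩ : ∃ m, n = m + 1 := ⟨n - 1, (Nat.succ_pred_eq_of_pos hn).symm⟩
    have h := hv (Fin.last m)
    rw [Fin.succ_last] at h
    exact dR_pos W ⟨_, h.symm⟩
  · intro i
    exact dR_pos W ⟨_, hv i⟩

lemma walk_snoc {n : ℕ} (v : Fin (n+1) → V) (u : V) :
    (∀ i : Fin (n+1), W.Adj ((Fin.snoc v u : Fin (n+2) → V) i.castSucc)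
        ((Fin.snoc v u : Fin (n+2) → V) i.succ)) ↔
      (∀ i : Fin n, W.Adj (v i.castSucc) (v i.succ)) ∧ W.Adj (v (Fin.last n)) u := by
  constructor
  · intro H
    refine ⟨fun i => ?_, ?_⟩
    · have h := H i.castSucc
      rwa [Fin.succ_castSucc, Fin.snoc_castSucc, Fin.snoc_castSucc] at h
    · have h := H (Fin.last n)
      rwa [Fin.succ_last, Fin.snoc_last, Fin.snoc_castSucc] at h
  · rintro ⟨H, hu⟩ i
    refine Fin.lastCases ?_ (fun j => ?_) i
    · rw [Fin.succ_last, Fin.snoc_last, Fin.snoc_castSucc]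
      exact hu
    · rw [Fin.succ_castSucc, Fin.snoc_castSucc, Fin.snoc_castSucc]
      exact H j


set_option linter.unusedSectionVars false
set_option maxHeartbeats 1000000

lemma dR_eq_card (x : V) :
    dR W x = ((Finset.univ.filter fun u => W.Adj x u).card : ℝ) := rfl

lemma filter_empty_of_dR_eq_zero {x : V} (hd : dR W x = 0) :
    (Finset.univ.filter fun u => W.Adj x u) = ∅ := by
  rw [dR_eq_card] at hd
  rw [← Finset.card_eq_zero]
  exact_mod_cast hd

lemma keyS : ∀ (n : ℕ) (g h : V → ℝ),
    ∑ v ∈ walkSet W n, dR W (v 0) * Pw W n v *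
      (g (v (Fin.last n)) + ∑ i : Fin n, h (v i.succ))
    = ∑ u : V, dR W u * g u + n * ∑ u : V, dR W u * h u := by
  intro n
  induction n with
  | zero =>
    intro g h
    simp only [walkSet, Pw, Finset.univ_eq_empty, Finset.prod_empty, Finset.sum_empty,
      Nat.cast_zero, zero_mul, add_zero, mul_one]
    rw [Finset.filter_true_of_mem (fun _ _ => fun i => i.elim0)]
    refine Fintype.sum_equiv (Equiv.funUnique (Fin 1) V) _ _ (fun v => ?_)
    rfl
  | succ n IH =>
    intro g h
    set G : V → ℝ := fun x =>
      (dR W x)⁻¹ * ∑ u ∈ Finset.univ.filter (fun u => W.Adj x u), (g u + h u) with hG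
    have step1 :
        ∑ v ∈ walkSet W (n+1), dR W (v 0) * Pw W (n+1) v *
          (g (v (Fin.last (n+1))) + ∑ i : Fin (n+1), h (v i.succ))
        = ∑ v ∈ walkSet W n, dR W (v 0) * Pw W n v *
            (G (v (Fin.last n)) + ∑ i : Fin n, h (v i.succ)) := by
      rw [walkSet, Finset.sum_filter, walkSet, Finset.sum_filter]
      rw [← Equiv.sum_comp (Fin.snocEquiv (fun _ : Fin (n+2) => V))]
      rw [Fintype.sum_prod_type, Finset.sum_comm]
      refine Finset.sum_congr rfl fun v _ => ?_
      have hsnoc : ∀ u : V,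
          ((Fin.snocEquiv (fun _ : Fin (n+2) => V)) (u, v) : Fin (n+2) → V) = Fin.snoc v u :=
        fun u => rfl
      simp only [hsnoc]
      by_cases hw : ∀ i : Fin n, W.Adj (v i.castSucc) (v i.succ)
      · have key : ∀ u : V,
            (if (∀ i : Fin (n+1), W.Adj ((Fin.snoc v u : Fin (n+2) → V) i.castSucc)
                ((Fin.snoc v u : Fin (n+2) → V) i.succ)) then
              dR W ((Fin.snoc v u : Fin (n+2) → V) 0) * Pw W (n+1) (Fin.snoc v u) *
                (g ((Fin.snoc v u : Fin (n+2) → V) (Fin.last (n+1))) +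
                  ∑ i : Fin (n+1), h ((Fin.snoc v u : Fin (n+2) → V) i.succ))
            else 0)
            = (if W.Adj (v (Fin.last n)) u then
                dR W (v 0) * Pw W n v * (dR W (v (Fin.last n)))⁻¹ *
                  (g u + h u + (∑ i : Fin n, h (v i.succ)))
              else 0) := by
          intro u
          rw [if_congr (walk_snoc W v u) rfl rfl]
          by_cases hu : W.Adj (v (Fin.last n)) u
          · rw [if_pos ⟨hw, hu⟩, if_pos hu]
            have h0 : (Fin.snoc v u : Fin (n+2) → V) 0 = v 0 := by
              rw [show (0 : Fin (n+2)) = Fin.castSucc 0 from rfl, Fin.snoc_castSucc]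
            have hP : Pw W (n+1) (Fin.snoc v u) = Pw W n v * (dR W (v (Fin.last n)))⁻¹ := by
              simp only [Pw, Fin.snoc_castSucc]
              rw [Fin.prod_univ_castSucc]
            have hg : (Fin.snoc v u : Fin (n+2) → V) (Fin.last (n+1)) = u := by
              rw [Fin.snoc_last]
            have hh : ∑ i : Fin (n+1), h ((Fin.snoc v u : Fin (n+2) → V) i.succ)
                = (∑ i : Fin n, h (v i.succ)) + h u := by
              rw [Fin.sum_univ_castSucc]
              congr 1
              · refine Finset.sum_congr rfl fun i _ => ?_
                rw [Fin.succ_castSucc, Fin.snoc_castSucc]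
              · rw [Fin.succ_last, Fin.snoc_last]
            rw [h0, hP, hg, hh]
            ring
          · rw [if_neg (fun hc => hu hc.2), if_neg hu]
        rw [Finset.sum_congr rfl (fun u _ => key u), ← Finset.sum_filter, if_pos hw]
        rw [← Finset.mul_sum, Finset.sum_add_distrib, Finset.sum_add_distrib,
          Finset.sum_const, nsmul_eq_mul, ← dR_eq_card]
        by_cases hd : dR W (v (Fin.last n)) = 0
        · have hemp := filter_empty_of_dR_eq_zero W hd
          have hS : (∑ i : Fin n, h (v i.succ)) = 0 := by
            rcases n with _ | m
            · simp
            · exact absurd hd (ne_of_gt (degPos W (Nat.succ_le_succ (Nat.zero_le m)) hw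
                (Fin.last (m+1))))
          simp [hG, hd, hemp, hS]
        · rw [hG]
          have : (∑ u ∈ Finset.univ.filter (fun u => W.Adj (v (Fin.last n)) u), g u)
              + (∑ u ∈ Finset.univ.filter (fun u => W.Adj (v (Fin.last n)) u), h u)
              = ∑ u ∈ Finset.univ.filter (fun u => W.Adj (v (Fin.last n)) u), (g u + h u) := by
            rw [Finset.sum_add_distrib]
          field_simp
          rw [← this]
      · have key0 : ∀ u : V,
            (if (∀ i : Fin (n+1), W.Adj ((Fin.snoc v u : Fin (n+2) → V) i.castSucc)
                ((Fin.snoc v u : Fin (n+2) → V) i.succ)) then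
              dR W ((Fin.snoc v u : Fin (n+2) → V) 0) * Pw W (n+1) (Fin.snoc v u) *
                (g ((Fin.snoc v u : Fin (n+2) → V) (Fin.last (n+1))) +
                  ∑ i : Fin (n+1), h ((Fin.snoc v u : Fin (n+2) → V) i.succ))
            else 0) = 0 := by
          intro u
          rw [if_neg]
          rw [walk_snoc]
          tauto
        rw [Finset.sum_congr rfl (fun u _ => key0 u), if_neg hw, Finset.sum_const, smul_zero]
    rw [step1, IH G h]
    have hGsum : ∑ u : V, dR W u * G u = ∑ x : V, dR W x * (g x + h x) := by
      have hpt : ∀ x : V, dR W x * G x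
          = ∑ u ∈ Finset.univ.filter (fun u => W.Adj x u), (g u + h u) := by
        intro x
        by_cases hd : dR W x = 0
        · simp [hG, hd, filter_empty_of_dR_eq_zero W hd]
        · rw [hG]
          field_simp
      rw [Finset.sum_congr rfl (fun x _ => hpt x), sum_nbr]
    rw [hGsum]
    simp only [mul_add, Finset.sum_add_distrib]
    push_cast
    ring


lemma homCount : (Nat.card ((⊤ : SimpleGraph (Fin 2)) →g W) : ℝ) = ∑ v : V, dR W v := by
  have e : ((⊤ : SimpleGraph (Fin 2)) →g W) ≃ {p : V × V // W.Adj p.1 p.2} := by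
    refine ⟨fun φ => ⟨(φ 0, φ 1), φ.map_adj (by simp)⟩,
      fun p => ⟨![p.1.1, p.1.2], fun {a b} hab => ?_⟩, fun φ => ?_, fun p => ?_⟩
    · simp only [SimpleGraph.top_adj] at hab
      fin_cases a <;> fin_cases b <;>
        first
          | exact absurd rfl hab
          | simpa using p.2
          | simpa using p.2.symm
    · apply DFunLike.ext
      intro i
      fin_cases i <;> rfl
    · rfl
  rw [Nat.card_congr e, Nat.card_eq_fintype_card, Fintype.card_subtype]
  have hcard : (Finset.univ.filter fun p : V × V => W.Adj p.1 p.2).card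
      = ∑ v : V, (Finset.univ.filter fun u => W.Adj v u).card := by
    rw [Finset.card_filter, Fintype.sum_prod_type]
    refine Finset.sum_congr rfl fun v _ => ?_
    rw [Finset.card_filter]
  rw [hcard]
  push_cast
  rfl

lemma jensenD [Nonempty V] (hE : 0 < ∑ v : V, dR W v) :
    (∑ v : V, dR W v) * Real.log ((∑ v : V, dR W v) / (Fintype.card V : ℝ))
      ≤ ∑ v : V, dR W v * Real.log (dR W v) := by
  set E2 := ∑ v : V, dR W v with hE2
  have hNpos : (0:ℝ) < (Fintype.card V : ℝ) := by
    exact_mod_cast Fintype.card_pos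
  have hfacpos : ∀ v : V, 0 < ((dR W v)⁻¹) ^ (dR W v / E2) := by
    intro v
    by_cases hd : dR W v = 0
    · simp [hd]
    · exact Real.rpow_pos_of_pos
        (inv_pos.mpr (lt_of_le_of_ne (dR_nonneg W v) (Ne.symm hd))) _
  have amgm := Real.geom_mean_le_arith_mean_weighted Finset.univ
      (fun v => dR W v / E2) (fun v => (dR W v)⁻¹)
      (fun i _ => div_nonneg (dR_nonneg W i) hE.le)
      (by rw [← Finset.sum_div, ← hE2]; field_simp)
      (fun i _ => inv_nonneg.2 (dR_nonneg W i))
  have hsum_le : ∑ v : V, (dR W v / E2) * (dR W v)⁻¹ ≤ (Fintype.card V : ℝ) / E2 := by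
    have hpt : ∀ v : V, (dR W v / E2) * (dR W v)⁻¹ ≤ 1 / E2 := by
      intro v
      by_cases hd : dR W v = 0
      · simp [hd]
        positivity
      · rw [div_mul_eq_mul_div, mul_inv_cancel₀ hd]
    calc ∑ v : V, (dR W v / E2) * (dR W v)⁻¹ ≤ ∑ _v : V, 1 / E2 :=
          Finset.sum_le_sum fun v _ => hpt v
      _ = (Fintype.card V : ℝ) / E2 := by
          rw [Finset.sum_const, nsmul_eq_mul, Finset.card_univ, mul_one_div]
  have hprodpos : 0 < ∏ v : V, ((dR W v)⁻¹) ^ (dR W v / E2) :=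
    Finset.prod_pos fun v _ => hfacpos v
  have hlogprod : Real.log (∏ v : V, ((dR W v)⁻¹) ^ (dR W v / E2))
      = -(∑ v : V, dR W v * Real.log (dR W v)) / E2 := by
    rw [Real.log_prod (fun v _ => ne_of_gt (hfacpos v))]
    have hpt : ∀ v : V, Real.log (((dR W v)⁻¹) ^ (dR W v / E2))
        = -(dR W v * Real.log (dR W v) / E2) := by
      intro v
      by_cases hd : dR W v = 0
      · simp [hd]
      · have hdpos : 0 < dR W v := lt_of_le_of_ne (dR_nonneg W v) (Ne.symm hd)
        rw [Real.log_rpow (inv_pos.mpr hdpos), Real.log_inv]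
        ring
    rw [Finset.sum_congr rfl (fun v _ => hpt v)]
    rw [neg_div, Finset.sum_div, ← Finset.sum_neg_distrib]
  have hfin : Real.log (∏ v : V, ((dR W v)⁻¹) ^ (dR W v / E2))
      ≤ Real.log ((Fintype.card V : ℝ) / E2) :=
    Real.log_le_log hprodpos (le_trans amgm hsum_le)
  rw [hlogprod, Real.log_div (ne_of_gt hNpos) (ne_of_gt hE)] at hfin
  rw [Real.log_div (ne_of_gt hE) (ne_of_gt hNpos)]
  have h2 := (div_le_iff₀ hE).mp hfin
  nlinarith [h2]

end Stmt12Aux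

/-- The homomorphism density `t(G, W)`. -/
noncomputable def homDensity {α β : Type} [Fintype α] [Fintype β]
    (G : SimpleGraph α) (W : SimpleGraph β) : ℝ :=
  (Nat.card (G →g W) : ℝ) / (Fintype.card β : ℝ) ^ (Fintype.card α)

set_option maxHeartbeats 1000000 in
open Stmt12Aux in
theorem stmt_12 {β : Type} [Fintype β] [Nonempty β] (W : SimpleGraph β)
    (n : ℕ) (hn : 1 ≤ n) (b : ℝ) (hb0 : 0 ≤ b) (hb1 : b ≤ 1) :
    (∑ v ∈ Finset.univ.filter
        (fun v : Fin (n + 1) → β => ∀ i : Fin n, W.Adj (v i.castSucc) (v i.succ)),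
        ((Finset.univ.filter fun u => W.Adj (v (Fin.last n)) u).card : ℝ) ^ b) /
      (Fintype.card β : ℝ) ^ ((n : ℝ) + 1 + b) ≥
    homDensity (⊤ : SimpleGraph (Fin 2)) W ^ ((n : ℝ) + b) := by
  have hb' : (1:ℝ) ≤ (n:ℝ) + b := by
    have h1 : (1:ℝ) ≤ (n:ℝ) := by exact_mod_cast hn
    linarith
  set N : ℝ := (Fintype.card β : ℝ) with hNdef
  have hN0 : 0 < N := by
    have : 0 < Fintype.card β := Fintype.card_pos
    rw [hNdef]
    exact_mod_cast this
  set E2 : ℝ := ∑ v : β, dR W v with hE2def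
  have hE2nn : 0 ≤ E2 := Finset.sum_nonneg fun v _ => dR_nonneg W v
  have hhd : homDensity (⊤ : SimpleGraph (Fin 2)) W = E2 / N ^ (2:ℕ) := by
    rw [homDensity, homCount W, ← hE2def, ← hNdef]
    norm_num
  have hsum_id : (∑ v ∈ Finset.univ.filter
        (fun v : Fin (n + 1) → β => ∀ i : Fin n, W.Adj (v i.castSucc) (v i.succ)),
        ((Finset.univ.filter fun u => W.Adj (v (Fin.last n)) u).card : ℝ) ^ b)
      = ∑ v ∈ walkSet W n, (dR W (v (Fin.last n))) ^ b := rfl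
  rw [ge_iff_le, hhd, hsum_id]
  by_cases hE : E2 = 0
  · rw [hE, zero_div, Real.zero_rpow (by linarith : (n:ℝ) + b ≠ 0)]
    apply div_nonneg
    · exact Finset.sum_nonneg fun v _ => Real.rpow_nonneg (dR_nonneg W _) b
    · exact Real.rpow_nonneg hN0.le _
  have hE2pos : 0 < E2 := lt_of_le_of_ne hE2nn (Ne.symm hE)
  have hmem : ∀ v ∈ walkSet W n, ∀ i : Fin n, W.Adj (v i.castSucc) (v i.succ) :=
    fun v hv => (Finset.mem_filter.mp hv).2
  have hd0 : ∀ v ∈ walkSet W n, 0 < dR W (v 0) := fun v hv => degPos W hn (hmem v hv) 0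
  have hdl : ∀ v ∈ walkSet W n, 0 < dR W (v (Fin.last n)) :=
    fun v hv => degPos W hn (hmem v hv) _
  have hPpos : ∀ v ∈ walkSet W n, 0 < Pw W n v := fun v hv =>
    Finset.prod_pos fun i _ => inv_pos.mpr (degPos W hn (hmem v hv) _)
  set w : (Fin (n+1) → β) → ℝ := fun v => dR W (v 0) * Pw W n v / E2 with hwdef
  set z : (Fin (n+1) → β) → ℝ := fun v => (dR W (v (Fin.last n))) ^ b / w v with hzdef
  have hwpos : ∀ v ∈ walkSet W n, 0 < w v := fun v hv =>
    div_pos (mul_pos (hd0 v hv) (hPpos v hv)) hE2pos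
  have hzpos : ∀ v ∈ walkSet W n, 0 < z v := fun v hv =>
    div_pos (Real.rpow_pos_of_pos (hdl v hv) b) (hwpos v hv)
  have hsumw : ∑ v ∈ walkSet W n, w v = 1 := by
    have h1 : ∑ v ∈ walkSet W n, dR W (v 0) * Pw W n v = E2 := by
      have hk := keyS W n (fun _ => (1:ℝ)) (fun _ => (0:ℝ))
      simpa using hk
    rw [hwdef]
    rw [← Finset.sum_div, h1, div_self (ne_of_gt hE2pos)]
  have amgm := Real.geom_mean_le_arith_mean_weighted (walkSet W n) w z
    (fun v hv => (hwpos v hv).le) hsumw (fun v hv => (hzpos v hv).le)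
  have hwz : ∑ v ∈ walkSet W n, w v * z v
      = ∑ v ∈ walkSet W n, (dR W (v (Fin.last n))) ^ b :=
    Finset.sum_congr rfl fun v hv => by
      rw [hzdef, mul_comm, div_mul_cancel₀ _ (ne_of_gt (hwpos v hv))]
  have hprodpos : 0 < ∏ v ∈ walkSet W n, z v ^ w v :=
    Finset.prod_pos fun v hv => Real.rpow_pos_of_pos (hzpos v hv) _
  have hlog : Real.log (∏ v ∈ walkSet W n, z v ^ w v)
      = ∑ v ∈ walkSet W n, w v * Real.log (z v) := by
    rw [Real.log_prod (fun v hv => ne_of_gt (Real.rpow_pos_of_pos (hzpos v hv) _))]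
    exact Finset.sum_congr rfl fun v hv => Real.log_rpow (hzpos v hv) _
  set D : ℝ := ∑ u : β, dR W u * Real.log (dR W u) with hDdef
  have hcent : ∑ v ∈ walkSet W n, w v * Real.log (z v)
      = Real.log E2 + ((n:ℝ) + b - 1) * (D / E2) := by
    have hpt : ∀ v ∈ walkSet W n, w v * Real.log (z v)
        = dR W (v 0) * Pw W n v *
            ((fun x => Real.log E2 + (b - 1) * Real.log (dR W x)) (v (Fin.last n))
              + ∑ i : Fin n, (fun x => Real.log (dR W x)) (v i.succ)) / E2 := by
      intro v hv
      have h0 := hd0 v hv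
      have hl := hdl v hv
      have hP := hPpos v hv
      have hlogP : Real.log (Pw W n v) = -∑ i : Fin n, Real.log (dR W (v i.castSucc)) := by
        rw [Pw, Real.log_prod
          (fun i _ => ne_of_gt (inv_pos.mpr (degPos W hn (hmem v hv) _)))]
        rw [← Finset.sum_neg_distrib]
        exact Finset.sum_congr rfl fun i _ => Real.log_inv _
      have hid1 : ∑ i : Fin n, Real.log (dR W (v i.castSucc))
          = (∑ i : Fin (n+1), Real.log (dR W (v i))) - Real.log (dR W (v (Fin.last n))) := by
        rw [Fin.sum_univ_castSucc]
        ring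
      have hid2 : ∑ i : Fin n, Real.log (dR W (v i.succ))
          = (∑ i : Fin (n+1), Real.log (dR W (v i))) - Real.log (dR W (v 0)) := by
        rw [Fin.sum_univ_succ]
        ring
      have hlogz : Real.log (z v) = b * Real.log (dR W (v (Fin.last n)))
          - (Real.log (dR W (v 0)) + Real.log (Pw W n v) - Real.log E2) := by
        rw [hzdef]
        simp only []
        rw [Real.log_div (ne_of_gt (Real.rpow_pos_of_pos hl b)) (ne_of_gt (hwpos v hv))]
        rw [Real.log_rpow hl, hwdef]
        simp only []
        rw [Real.log_div (ne_of_gt (mul_pos h0 hP)) (ne_of_gt hE2pos),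
          Real.log_mul (ne_of_gt h0) (ne_of_gt hP)]
      simp only []
      rw [hwdef]
      simp only []
      rw [hlogz, hlogP, hid1, hid2]
      ring
    rw [Finset.sum_congr rfl hpt, ← Finset.sum_div,
      keyS W n (fun x => Real.log E2 + (b - 1) * Real.log (dR W x))
        (fun x => Real.log (dR W x))]
    have hexp : ∑ u : β, dR W u * (Real.log E2 + (b - 1) * Real.log (dR W u))
        = E2 * Real.log E2 + (b - 1) * D := by
      have hpt2 : ∀ u : β, dR W u * (Real.log E2 + (b - 1) * Real.log (dR W u))
          = dR W u * Real.log E2 + (b - 1) * (dR W u * Real.log (dR W u)) := fun u => by ring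
      rw [Finset.sum_congr rfl (fun u _ => hpt2 u), Finset.sum_add_distrib,
        ← Finset.sum_mul, ← Finset.mul_sum, ← hE2def, ← hDdef]
    rw [hexp, ← hDdef]
    field_simp
    ring
  have hjen : E2 * Real.log (E2 / N) ≤ D := jensenD W (hE2def ▸ hE2pos)
  have h1 : Real.log (E2 / N) ≤ D / E2 := (le_div_iff₀ hE2pos).mpr (by linarith)
  have hcoef : (0:ℝ) ≤ (n:ℝ) + b - 1 := by linarith
  have main : E2 * (E2 / N) ^ ((n:ℝ) + b - 1)
      ≤ ∑ v ∈ walkSet W n, (dR W (v (Fin.last n))) ^ b := by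
    have c1 : Real.exp (Real.log E2 + ((n:ℝ) + b - 1) * Real.log (E2 / N))
        ≤ Real.exp (∑ v ∈ walkSet W n, w v * Real.log (z v)) := by
      rw [hcent]
      exact Real.exp_le_exp.mpr
        (add_le_add_right (mul_le_mul_of_nonneg_left h1 hcoef) _)
    have c2 : Real.exp (∑ v ∈ walkSet W n, w v * Real.log (z v))
        = ∏ v ∈ walkSet W n, z v ^ w v := by
      rw [← hlog, Real.exp_log hprodpos]
    have c3 : Real.exp (Real.log E2 + ((n:ℝ) + b - 1) * Real.log (E2 / N))
        = E2 * (E2 / N) ^ ((n:ℝ) + b - 1) := by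
      rw [Real.exp_add, Real.exp_log hE2pos,
        Real.rpow_def_of_pos (div_pos hE2pos hN0), mul_comm (Real.log (E2 / N))]
    calc E2 * (E2 / N) ^ ((n:ℝ) + b - 1)
        = Real.exp (Real.log E2 + ((n:ℝ) + b - 1) * Real.log (E2 / N)) := c3.symm
      _ ≤ ∏ v ∈ walkSet W n, z v ^ w v := by rw [← c2]; exact c1
      _ ≤ ∑ v ∈ walkSet W n, w v * z v := amgm
      _ = ∑ v ∈ walkSet W n, (dR W (v (Fin.last n))) ^ b := hwz
  have hQ : (E2 / N ^ (2:ℕ)) ^ ((n:ℝ) + b)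
      = (E2 * (E2 / N) ^ ((n:ℝ) + b - 1)) / N ^ ((n:ℝ) + 1 + b) := by
    have hq1 : (0:ℝ) < E2 / N ^ (2:ℕ) := by positivity
    rw [Real.rpow_def_of_pos hq1, Real.rpow_def_of_pos (div_pos hE2pos hN0),
      Real.rpow_def_of_pos hN0, mul_div_assoc, ← Real.exp_sub,
      ← Real.exp_log hE2pos, ← Real.exp_add, Real.exp_eq_exp]
    rw [Real.log_div (Real.exp_ne_zero _) (by positivity : (N:ℝ) ^ (2:ℕ) ≠ 0),
      Real.log_div (Real.exp_ne_zero _) (ne_of_gt hN0), Real.log_exp, Real.log_pow]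
    push_cast
    ring
  rw [hQ]
  have hden : (0:ℝ) < N ^ ((n:ℝ) + 1 + b) := Real.rpow_pos_of_pos hN0 _
  exact (div_le_div_iff_of_pos_right hden).mpr main
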